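/- Let h_k(x) = ∑_{j=0}^k (−1)^j C(k,j) (x − j)_+^{H − 1/α} with H ∈ (0,1), α ∈ (0,2), k ≥ 1. Then h_k(x) ~ q · x^{H − 1/α − k} as x → ∞, where q = ∏_{i=0}^{k−1} (H − 1/α − i); i.e., h_k(x)/x^{H−1/α−k} → q. -/

import Mathlib

open Filter Topology

noncomputable def Dk (a : ℝ) (k : ℕ) (x : ℝ) : ℝ :=
  ∑ j ∈ Finset.range (k + 1), (-1 : ℝ) ^ j * (k.choose j) *
    (if 0 < x - j then (x - (j : ℝ)) ^ a else 0)

lemma sum_succ_eq (f : ℝ → ℝ) (k : ℕ) (x : ℝ) :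
    (∑ j ∈ Finset.range (k + 2), (-1:ℝ)^j * ((k+1).choose j) * f (x - j))
    = (∑ j ∈ Finset.range (k + 1), (-1:ℝ)^j * (k.choose j) * f (x - j))
      - ∑ j ∈ Finset.range (k + 1), (-1:ℝ)^j * (k.choose j) * f (x - 1 - j) := by
  rw [Finset.sum_range_succ' (fun j => (-1:ℝ)^j * ((k+1).choose j) * f (x - j)) (k+1),
    Finset.sum_range_succ' (fun j => (-1:ℝ)^j * (k.choose j) * f (x - j)) k]
  have h1 : ∀ j ∈ Finset.range (k+1),
      (-1:ℝ)^(j+1) * (((k+1).choose (j+1) : ℕ) : ℝ) * f (x - ↑(j+1))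
      = (-((-1:ℝ)^j * (k.choose j) * f (x - 1 - j)))
        + (-1:ℝ)^(j+1) * ((k.choose (j+1) : ℕ) : ℝ) * f (x - ↑(j+1)) := by
    intro j hj
    rw [Nat.choose_succ_succ]
    push_cast
    have hx : x - (↑j + 1) = x - 1 - j := by ring
    rw [hx]
    ring
  rw [Finset.sum_congr rfl h1, Finset.sum_add_distrib, Finset.sum_neg_distrib]
  have h2 : (∑ j ∈ Finset.range (k+1), (-1:ℝ)^(j+1) * ((k.choose (j+1) : ℕ) : ℝ) * f (x - ↑(j+1)))
      = ∑ j ∈ Finset.range k, (-1:ℝ)^(j+1) * ((k.choose (j+1) : ℕ) : ℝ) * f (x - ↑(j+1)) := by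
    rw [Finset.sum_range_succ, Nat.choose_succ_self]
    simp
  rw [h2]
  simp only [Nat.choose_zero_right, Nat.cast_one, Nat.cast_zero, pow_zero]
  ring

lemma Dk_succ (a : ℝ) (k : ℕ) (x : ℝ) :
    Dk a (k+1) x = Dk a k x - Dk a k (x-1) := by
  have := sum_succ_eq (fun y => if 0 < y then y ^ a else 0) k x
  simp only [Dk]
  exact this

lemma mem_pos {k : ℕ} {x : ℝ} (hx : (k:ℝ) < x) {j : ℕ} (hj : j ∈ Finset.range (k+1)) :
    0 < x - j := by
  have : (j:ℝ) ≤ k := by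
    exact_mod_cast Nat.lt_succ_iff.mp (Finset.mem_range.mp hj)
  linarith

lemma hasDerivAt_Dk (a : ℝ) (k : ℕ) {x : ℝ} (hx : (k:ℝ) < x) :
    HasDerivAt (Dk a k) (a * Dk (a-1) k x) x := by
  have hsum : HasDerivAt
      (fun y => ∑ j ∈ Finset.range (k+1), (-1:ℝ)^j * (k.choose j) * (y - j)^a)
      (∑ j ∈ Finset.range (k+1), (-1:ℝ)^j * (k.choose j) * (a * (x - j)^(a-1))) x := by
    apply HasDerivAt.fun_sum
    intro j hj
    have hpos : 0 < x - j := mem_pos hx hj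
    have h1 : HasDerivAt (fun y : ℝ => (y - j : ℝ)) 1 x := by
      simpa using (hasDerivAt_id x).sub_const (j:ℝ)
    have h2 : HasDerivAt (fun y : ℝ => (y - j)^a) (a * (x - j)^(a-1)) x := by
      have := (Real.hasDerivAt_rpow_const (x := x - j) (p := a) (Or.inl hpos.ne')).comp x h1
      simpa [Function.comp_def] using this
    exact h2.const_mul _
  have heq : Dk a k =ᶠ[𝓝 x] fun y => ∑ j ∈ Finset.range (k+1),
      (-1:ℝ)^j * (k.choose j) * (y - j)^a := by
    filter_upwards [Ioi_mem_nhds hx] with y hy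
    unfold Dk
    refine Finset.sum_congr rfl fun j hj => ?_
    rw [if_pos (mem_pos hy hj)]
  have : HasDerivAt (Dk a k)
      (∑ j ∈ Finset.range (k+1), (-1:ℝ)^j * (k.choose j) * (a * (x - j)^(a-1))) x :=
    hsum.congr_of_eventuallyEq heq
  convert this using 1
  unfold Dk
  rw [Finset.mul_sum]
  refine Finset.sum_congr rfl fun j hj => ?_
  rw [if_pos (mem_pos hx hj)]
  ring

lemma main_lemma (k : ℕ) : ∀ a : ℝ,
    Tendsto (fun x => Dk a k x / x ^ (a - k)) atTop
      (𝓝 (∏ i ∈ Finset.range k, (a - (i:ℝ)))) := by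
  induction k with
  | zero =>
    intro a
    simp only [Finset.prod_range_zero]
    have : (fun x : ℝ => Dk a 0 x / x ^ (a - (0:ℕ))) =ᶠ[atTop] fun _ => (1:ℝ) := by
      filter_upwards [eventually_gt_atTop (0:ℝ)] with x hx
      have hD : Dk a 0 x = x ^ a := by simp [Dk, if_pos hx]
      rw [hD, Nat.cast_zero, sub_zero, div_self (Real.rpow_pos_of_pos hx a).ne']
    exact tendsto_const_nhds.congr' this.symm
  | succ k ih =>
    intro a
    classical
    -- MVT existence
    have key : ∀ x : ℝ, (k:ℝ) + 1 < x →
        ∃ c ∈ Set.Ioo (x-1) x, Dk a (k+1) x = a * Dk (a-1) k c := by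
      intro x hx
      have hlt : x - 1 < x := by linarith
      have hsub : ∀ y ∈ Set.Icc (x-1) x, (k:ℝ) < y := by
        intro y hy; have := hy.1; linarith
      obtain ⟨c, hc, hceq⟩ := exists_hasDerivAt_eq_slope (Dk a k)
        (fun y => a * Dk (a-1) k y) hlt
        (fun y hy => (hasDerivAt_Dk a k (hsub y hy)).continuousAt.continuousWithinAt)
        (fun y hy => hasDerivAt_Dk a k (hsub y (Set.mem_Icc_of_Ioo hy)))
      refine ⟨c, hc, ?_⟩
      rw [Dk_succ]
      rw [hceq]
      have : x - (x - 1) = 1 := by ring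
      rw [this, div_one]
    set ξ : ℝ → ℝ := fun x =>
      if h : ∃ c ∈ Set.Ioo (x-1) x, Dk a (k+1) x = a * Dk (a-1) k c then h.choose else x
      with hξdef
    have hξspec : ∀ x : ℝ, (k:ℝ) + 1 < x →
        ξ x ∈ Set.Ioo (x-1) x ∧ Dk a (k+1) x = a * Dk (a-1) k (ξ x) := by
      intro x hx
      have h := key x hx
      simp only [hξdef, dif_pos h]
      exact ⟨h.choose_spec.1, h.choose_spec.2⟩
    have hev : ∀ᶠ x in atTop, ξ x ∈ Set.Ioo (x-1) x ∧ Dk a (k+1) x = a * Dk (a-1) k (ξ x) := by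
      filter_upwards [eventually_gt_atTop ((k:ℝ)+1)] with x hx using hξspec x hx
    have hξtop : Tendsto ξ atTop atTop := by
      apply tendsto_atTop_mono' atTop (f₁ := fun x => x - 1)
      · filter_upwards [hev] with x hx using le_of_lt hx.1.1
      · exact tendsto_atTop_add_const_right _ (-1) tendsto_id
    have hratio : Tendsto (fun x => ξ x / x) atTop (𝓝 1) := by
      apply tendsto_of_tendsto_of_tendsto_of_le_of_le' (g := fun x => (x-1)/x)
        (h := fun _ => (1:ℝ))
      · have : (fun x : ℝ => (x-1)/x) =ᶠ[atTop] fun x => 1 - x⁻¹ := by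
          filter_upwards [eventually_ne_atTop (0:ℝ)] with x hx
          field_simp
        have h10 : Tendsto (fun x : ℝ => 1 - x⁻¹) atTop (𝓝 1) := by
          have h := (tendsto_const_nhds (x := (1:ℝ)) (f := atTop (α := ℝ))).sub
            tendsto_inv_atTop_zero
          simpa using h
        exact h10.congr' this.symm
      · exact tendsto_const_nhds
      · filter_upwards [hev, eventually_gt_atTop (0:ℝ)] with x hx hx0
        gcongr
        exact hx.1.1.le
      · filter_upwards [hev, eventually_gt_atTop (0:ℝ)] with x hx hx0
        exact div_le_one_of_le₀ hx.1.2.le hx0.le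
    have hpow : Tendsto (fun x => (ξ x / x) ^ (a - 1 - k)) atTop (𝓝 1) := by
      have := hratio.rpow_const (p := a - 1 - k) (Or.inl one_ne_zero)
      simpa using this
    have hIH : Tendsto (fun x => Dk (a-1) k (ξ x) / (ξ x) ^ ((a-1) - k)) atTop
        (𝓝 (∏ i ∈ Finset.range k, (a - 1 - (i:ℝ)))) := (ih (a-1)).comp hξtop
    have hcomb : Tendsto (fun x => a * (Dk (a-1) k (ξ x) / (ξ x) ^ ((a-1) - k))
          * ((ξ x / x) ^ (a - 1 - k))) atTop
        (𝓝 (a * (∏ i ∈ Finset.range k, (a - 1 - (i:ℝ))) * 1)) :=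
      (tendsto_const_nhds.mul hIH).mul hpow
    have heq : (fun x => a * (Dk (a-1) k (ξ x) / (ξ x) ^ ((a-1) - k))
          * ((ξ x / x) ^ (a - 1 - k)))
        =ᶠ[atTop] fun x => Dk a (k+1) x / x ^ (a - ((k:ℝ)+1)) := by
      filter_upwards [hev, eventually_gt_atTop ((0:ℝ) ⊔ ((k:ℝ)+1))] with x hx hx0
      have hx0' : (0:ℝ) < x := lt_of_le_of_lt le_sup_left hx0
      have hξ0 : (0:ℝ) < ξ x := by
        have hk1 : (k:ℝ) + 1 < x := lt_of_le_of_lt le_sup_right hx0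
        have := hx.1.1
        linarith
      have hdiv : (ξ x / x) ^ (a - 1 - k) = (ξ x) ^ (a - 1 - k) / x ^ (a - 1 - k) :=
        Real.div_rpow hξ0.le hx0'.le _
      rw [hx.2, hdiv]
      have h1 : (a - 1) - (k:ℝ) = a - 1 - k := by ring
      have h2 : a - ((k:ℝ)+1) = a - 1 - k := by ring
      rw [h1, h2]
      have hξne : (ξ x) ^ (a - 1 - (k:ℝ)) ≠ 0 := (Real.rpow_pos_of_pos hξ0 _).ne'
      field_simp
    have hprod : (∏ i ∈ Finset.range (k+1), (a - (i:ℝ)))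
        = a * (∏ i ∈ Finset.range k, (a - 1 - (i:ℝ))) * 1 := by
      rw [Finset.prod_range_succ', mul_one]
      simp only [Nat.cast_add, Nat.cast_one, Nat.cast_zero, sub_zero]
      rw [mul_comm]
      congr 1
      exact Finset.prod_congr rfl fun i _ => by ring
    have goal := hcomb.congr' heq
    rw [hprod]
    have : (fun x : ℝ => Dk a (k+1) x / x ^ (a - ((k:ℝ)+1)))
        = fun x : ℝ => Dk a (k+1) x / x ^ (a - ((k+1:ℕ):ℝ)) := by
      push_cast; rfl
    rw [← this]
    exact goal

theorem stmt_16 (α H : ℝ) (hα : α ∈ Set.Ioo (0:ℝ) 2) (hH : H ∈ Set.Ioo (0:ℝ) 1)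
    (k : ℕ) (hk : 1 ≤ k) :
    Tendsto (fun x : ℝ =>
        (∑ j ∈ Finset.range (k + 1), (-1 : ℝ) ^ j * (k.choose j) *
          (if 0 < x - j then (x - (j : ℝ)) ^ (H - 1 / α) else 0)) / x ^ (H - 1 / α - k))
      atTop (𝓝 (∏ i ∈ Finset.range k, (H - 1 / α - (i : ℝ)))) := by
  exact main_lemma k (H - 1 / α)
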